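/- Let L be an indecomposable noncommutative finite-dimensional Lie algebra over a field F with center Z(L). If there exists x ∈ L such that dim ker(ad x) = dim Z(L) + 1, then the commuting graph Γ(L) is disconnected. -/

import Mathlib

/-- The commuting graph of a Lie algebra `L` over `F`: vertices are the elements of
`L` outside the center, and two distinct vertices are adjacent iff they commute. -/
def commutingGraph (F : Type*) [CommRing F] (L : Type*) [LieRing L] [LieAlgebra F L] :
    SimpleGraph {x : L // x ∉ LieAlgebra.center F L} where
  Adj x y := x ≠ y ∧ ⁅(x : L), (y : L)⁆ = 0
  symm := ⟨fun x y h => ⟨h.1.symm, by rw [← lie_skew, h.2, neg_zero]⟩⟩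
  loopless := ⟨fun x h => h.1 rfl⟩

open Module in
lemma dim_center_succ_contra (F : Type*) [Field F] (L : Type*) [LieRing L] [LieAlgebra F L]
    [Module.Finite F L]
    (h : finrank F L = finrank F (LieAlgebra.center F L).toSubmodule + 1)
    (hnc : ∃ x y : L, ⁅x, y⁆ ≠ 0) : False := by
  obtain ⟨a, b, hab⟩ := hnc
  have ha : a ∉ LieAlgebra.center F L := by
    intro hz
    exact hab (by rw [← lie_skew, hz b, neg_zero])
  set Z := (LieAlgebra.center F L).toSubmodule with hZ
  set M := Z ⊔ (F ∙ a) with hM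
  have hlt : Z < M := lt_of_le_of_ne le_sup_left (by
    intro hEq
    exact ha (by
      have : a ∈ M := Submodule.mem_sup_right (Submodule.mem_span_singleton_self a)
      rwa [← hEq] at this))
  have h1 : finrank F Z < finrank F M := Submodule.finrank_lt_finrank_of_lt hlt
  have h2 : finrank F M ≤ finrank F L := (Submodule.finrank_le M)
  have hMeq : finrank F M = finrank F L := le_antisymm h2 (by omega)
  have hMtop : M = ⊤ := Submodule.eq_top_of_finrank_eq hMeq
  have hb : b ∈ M := hMtop ▸ Submodule.mem_top
  obtain ⟨z, hzZ, w, hw, hsum⟩ := Submodule.mem_sup.mp hb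
  obtain ⟨c, rfl⟩ := Submodule.mem_span_singleton.mp hw
  apply hab
  rw [← hsum, lie_add, lie_smul, lie_self, smul_zero, add_zero]
  exact hzZ a


/-- if `L` is an indecomposable noncommutative finite-dimensional Lie algebra
and for some `x ∈ L` the kernel of `ad x` has dimension `dim Z(L) + 1`, then the commuting
graph of `L` is disconnected. -/
theorem stmt5 (F : Type*) [Field F] (L : Type*) [LieRing L] [LieAlgebra F L]
    [Module.Finite F L]
    (hnc : ∃ x y : L, ⁅x, y⁆ ≠ 0)
    (hind : ¬ ∃ I J : LieIdeal F L, I ≠ ⊥ ∧ J ≠ ⊥ ∧ I ⊓ J = ⊥ ∧ I ⊔ J = ⊤)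
    (hx : ∃ x : L, Module.finrank F (LinearMap.ker (LieAlgebra.ad F L x)) =
      Module.finrank F (LieAlgebra.center F L).toSubmodule + 1) :
    ¬ (commutingGraph F L).Connected := by
  intro hconn
  obtain ⟨x, hdim⟩ := hx
  set Z := (LieAlgebra.center F L).toSubmodule with hZ
  set K := LinearMap.ker (LieAlgebra.ad F L x) with hK
  have hZK : Z ≤ K := fun z hz => by
    simp only [hK, LinearMap.mem_ker, LieAlgebra.ad_apply]
    exact hz x
  by_cases hxc : x ∈ LieAlgebra.center F L
  · have hKtop : K = ⊤ := by
      ext y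
      simp only [hK, LinearMap.mem_ker, LieAlgebra.ad_apply, Submodule.mem_top, iff_true]
      rw [← lie_skew, hxc y, neg_zero]
    have hfin : Module.finrank F L = Module.finrank F Z + 1 := by
      rw [← hdim, hKtop, finrank_top]
    exact dim_center_succ_contra F L hfin hnc
  · have hxK : x ∈ K := by
      simp only [hK, LinearMap.mem_ker, LieAlgebra.ad_apply, lie_self]
    set M := Z ⊔ (F ∙ x) with hM
    have hMK : M ≤ K := sup_le hZK ((Submodule.span_singleton_le_iff_mem x K).mpr hxK)
    have hlt : Z < M := lt_of_le_of_ne le_sup_left (by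
      intro hEq
      exact hxc (by
        have : x ∈ M := Submodule.mem_sup_right (Submodule.mem_span_singleton_self x)
        rwa [← hEq] at this))
    have h1 : Module.finrank F Z < Module.finrank F M := Submodule.finrank_lt_finrank_of_lt hlt
    have h2 : Module.finrank F M ≤ Module.finrank F K := Submodule.finrank_mono hMK
    have hMKeq : M = K := Submodule.eq_of_le_of_finrank_le hMK (by omega)
    -- key step: if u ∉ Z, ⁅x,u⁆ = 0, ⁅u,w⁆ = 0 then ⁅x,w⁆ = 0
    have key : ∀ u w : L, u ∉ LieAlgebra.center F L → ⁅x, u⁆ = 0 → ⁅u, w⁆ = 0 →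
        ⁅x, w⁆ = 0 := by
      intro u w hu hxu huw
      have huK : u ∈ M := by
        rw [hMKeq]
        simpa only [hK, LinearMap.mem_ker, LieAlgebra.ad_apply] using hxu
      obtain ⟨z, hzZ, v, hv, hsum⟩ := Submodule.mem_sup.mp huK
      obtain ⟨c, rfl⟩ := Submodule.mem_span_singleton.mp hv
      have hc : c ≠ 0 := by
        rintro rfl
        rw [zero_smul, add_zero] at hsum
        exact hu (hsum ▸ hzZ)
      have hzw : ⁅z, w⁆ = 0 := by rw [← lie_skew, hzZ w, neg_zero]
      have : c • ⁅x, w⁆ = 0 := by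
        have := huw
        rw [← hsum, add_lie, hzw, zero_add, smul_lie] at this
        exact this
      exact (smul_eq_zero.mp this).resolve_left hc
    -- every y ∈ L lies in K
    have hKtop : K = ⊤ := by
      rw [eq_top_iff]
      intro y _
      simp only [hK, LinearMap.mem_ker, LieAlgebra.ad_apply]
      by_cases hy : y ∈ LieAlgebra.center F L
      · exact hy x
      · have hreach := hconn.preconnected ⟨x, hxc⟩ ⟨y, hy⟩
        obtain ⟨p⟩ := hreach
        have walkprop : ∀ (u v : {a : L // a ∉ LieAlgebra.center F L}),
            (commutingGraph F L).Walk u v → ⁅x, (u : L)⁆ = 0 → ⁅x, (v : L)⁆ = 0 := by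
          intro u v p
          induction p with
          | nil => exact id
          | @cons a b c hab p ih =>
            intro ha
            exact ih (key a b a.2 ha (show a ≠ b ∧ ⁅(a : L), (b : L)⁆ = 0 from hab).2)
        exact walkprop _ _ p (lie_self x)
    have hfin : Module.finrank F L = Module.finrank F Z + 1 := by
      rw [← hdim, hKtop, finrank_top]
    exact dim_center_succ_contra F L hfin hnc
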